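/- Conversely, every real symmetric positive-definite solution Θ of HᵀΘ = ΘH, for H real with N distinct real eigenvalues, has the form Θ = Σₙ κₙ wₙwₙᵀ with some positive coefficients κₙ, where wₙ are the eigenvectors of Hᵀ. -/

import Mathlib

open scoped Matrix

/-- every real symmetric positive-definite solution of
HᵀΘ = ΘH, for H with N distinct real eigenvalues, is Θ = Σₙ κₙ wₙwₙᵀ with
positive κₙ, where wₙ are eigenvectors of Hᵀ. -/
theorem stmt_16 {N : ℕ} (H : Matrix (Fin N) (Fin N) ℝ)
    (E : Fin N → ℝ) (hE : Function.Injective E)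
    (w : Fin N → (Fin N → ℝ)) (hw0 : ∀ n, w n ≠ 0)
    (hw : ∀ n, Hᵀ.mulVec (w n) = E n • w n)
    (hHdiag : ∃ P : Matrix (Fin N) (Fin N) ℝ, IsUnit P.det ∧
      H = P * Matrix.diagonal E * P⁻¹)
    (Th : Matrix (Fin N) (Fin N) ℝ)
    (hs : Th.IsSymm) (hpd : Th.PosDef) (hD : Hᵀ * Th = Th * H) :
    ∃ κ : Fin N → ℝ, (∀ n, 0 < κ n) ∧
      Th = ∑ n, κ n • Matrix.vecMulVec (w n) (w n) := by
  obtain ⟨P, hP, hH⟩ := hHdiag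
  have hPP : P * P⁻¹ = 1 := Matrix.mul_nonsing_inv P hP
  have hPP' : P⁻¹ * P = 1 := Matrix.nonsing_inv_mul P hP
  -- coordinates of w n in the basis of rows of P⁻¹
  set u : Fin N → (Fin N → ℝ) := fun n => w n ᵥ* P with hu_def
  have hu0 : ∀ n k, k ≠ n → u n k = 0 := by
    intro n k hk
    have h1 : w n ᵥ* H = E n • w n := by
      rw [← Matrix.mulVec_transpose]; exact hw n
    have h2 : (u n) ᵥ* Matrix.diagonal E = E n • u n := by
      have h3 := congrArg (· ᵥ* P) h1
      simp only [hH] at h3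
      rw [show P * Matrix.diagonal E * P⁻¹ = (P * Matrix.diagonal E) * P⁻¹ from rfl,
        ← Matrix.vecMul_vecMul, ← Matrix.vecMul_vecMul] at h3
      rw [Matrix.vecMul_vecMul, hPP', Matrix.vecMul_one] at h3
      rw [hu_def]
      simpa [Matrix.smul_vecMul] using h3
    have h4 := congrFun h2 k
    rw [Matrix.vecMul_diagonal] at h4
    have h5 : (E k - E n) * u n k = 0 := by
      have : u n k * E k = E n * u n k := h4
      ring_nf
      linarith [this]
    rcases mul_eq_zero.mp h5 with h | h
    · exact absurd (hE (by linarith)) hk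
    · exact h
  -- w n = u n n • (row n of P⁻¹)
  have hwn : ∀ n i, w n i = u n n * P⁻¹ n i := by
    intro n i
    have : w n = u n ᵥ* P⁻¹ := by
      rw [hu_def]
      simp only [Matrix.vecMul_vecMul, hPP, Matrix.vecMul_one]
    rw [this]
    show ∑ k, u n k * P⁻¹ k i = _
    rw [Finset.sum_eq_single n]
    · intro k _ hk; rw [hu0 n k hk, zero_mul]
    · intro h; exact absurd (Finset.mem_univ n) h
  have hc0 : ∀ n, u n n ≠ 0 := by
    intro n hc
    apply hw0 n
    funext i
    rw [hwn n i, hc, zero_mul]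
    rfl
  -- M = Pᵀ Th P commutes with diagonal E
  set M : Matrix (Fin N) (Fin N) ℝ := Pᵀ * Th * P with hM_def
  have hcomm : Matrix.diagonal E * M = M * Matrix.diagonal E := by
    have h1 : Pᵀ * (Hᵀ * Th) * P = Pᵀ * (Th * H) * P := by rw [hD]
    have hHP : H * P = P * Matrix.diagonal E := by
      rw [hH, Matrix.mul_assoc (P * Matrix.diagonal E), hPP', Matrix.mul_one]
    have hHt : Pᵀ * Hᵀ = Matrix.diagonal E * Pᵀ := by
      have := congrArg Matrix.transpose hHP
      rw [Matrix.transpose_mul, Matrix.transpose_mul, Matrix.diagonal_transpose] at this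
      exact this
    calc Matrix.diagonal E * M = Matrix.diagonal E * Pᵀ * Th * P := by
          rw [hM_def]; simp only [Matrix.mul_assoc]
      _ = Pᵀ * Hᵀ * Th * P := by rw [hHt]
      _ = Pᵀ * (Hᵀ * Th) * P := by rw [Matrix.mul_assoc Pᵀ]
      _ = Pᵀ * (Th * H) * P := h1
      _ = Pᵀ * Th * (H * P) := by rw [Matrix.mul_assoc Pᵀ, Matrix.mul_assoc Pᵀ, Matrix.mul_assoc Th]
      _ = Pᵀ * Th * (P * Matrix.diagonal E) := by rw [hHP]
      _ = M * Matrix.diagonal E := by rw [hM_def, Matrix.mul_assoc (Pᵀ * Th)]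
  have hMoff : ∀ i j, i ≠ j → M i j = 0 := by
    intro i j hij
    have h := congrFun (congrFun hcomm i) j
    rw [Matrix.diagonal_mul, Matrix.mul_diagonal] at h
    have h5 : (E i - E j) * M i j = 0 := by ring_nf; linarith [h]
    rcases mul_eq_zero.mp h5 with h | h
    · exact absurd (hE (by linarith)) hij
    · exact h
  -- diagonal entries of M are positive
  have hMpos : ∀ n, 0 < M n n := by
    intro n
    have hcol : P *ᵥ Pi.single n 1 ≠ 0 := by
      intro hz
      have : (P⁻¹ * P) *ᵥ Pi.single n 1 = 0 := by
        rw [← Matrix.mulVec_mulVec, hz, Matrix.mulVec_zero]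
      rw [hPP', Matrix.one_mulVec] at this
      have := congrFun this n
      simp at this
    have hq := hpd.dotProduct_mulVec_pos hcol
    have hrw : star (P *ᵥ Pi.single n 1) ⬝ᵥ Th *ᵥ (P *ᵥ Pi.single n 1)
        = M n n := by
      rw [hM_def]
      simp only [star_trivial, Matrix.mul_apply, dotProduct, Matrix.mulVec,
        Matrix.transpose_apply, Pi.single_apply, mul_ite, mul_one, mul_zero,
        Finset.sum_ite_eq', Finset.mem_univ, if_true, Finset.sum_mul, Finset.mul_sum]
      rw [Finset.sum_comm]
      apply Finset.sum_congr rfl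
      intro i _
      apply Finset.sum_congr rfl
      intro j _
      ring
    rw [hrw] at hq
    exact hq
  -- Th = (P⁻¹)ᵀ * M * P⁻¹ entrywise
  have hTh : ∀ i j, Th i j = ∑ n, M n n * (P⁻¹ n i * P⁻¹ n j) := by
    have hThM : Th = (P⁻¹)ᵀ * M * P⁻¹ := by
      rw [hM_def]
      calc Th = 1 * Th * 1 := by rw [Matrix.one_mul, Matrix.mul_one]
        _ = ((P * P⁻¹)ᵀ) * Th * (P * P⁻¹) := by rw [hPP, Matrix.transpose_one]
        _ = (P⁻¹)ᵀ * (Pᵀ * Th * P) * P⁻¹ := by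
            rw [Matrix.transpose_mul]
            noncomm_ring
    intro i j
    rw [hThM]
    rw [Matrix.mul_apply]
    have : ∀ k, ((P⁻¹)ᵀ * M) i k = P⁻¹ k i * M k k := by
      intro k
      rw [Matrix.mul_apply]
      rw [Finset.sum_eq_single k]
      · rfl
      · intro b _ hb
        rw [hMoff b k hb, mul_zero]
      · intro h; exact absurd (Finset.mem_univ k) h
    calc ∑ k, ((P⁻¹)ᵀ * M) i k * P⁻¹ k j
        = ∑ k, P⁻¹ k i * M k k * P⁻¹ k j := by
          apply Finset.sum_congr rfl; intro k _; rw [this k]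
      _ = ∑ n, M n n * (P⁻¹ n i * P⁻¹ n j) := by
          apply Finset.sum_congr rfl; intro k _; ring
  refine ⟨fun n => M n n / (u n n)^2,
    fun n => div_pos (hMpos n) (pow_two_pos_of_ne_zero (hc0 n)), ?_⟩
  ext i j
  have hr : (∑ n, (M n n / (u n n)^2) • Matrix.vecMulVec (w n) (w n)) i j
      = ∑ n, M n n / (u n n)^2 * (w n i * w n j) := by
    rw [Matrix.sum_apply]
    apply Finset.sum_congr rfl
    intro n _
    simp [Matrix.vecMulVec_apply]
    try ring
  rw [hr, hTh i j]
  apply Finset.sum_congr rfl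
  intro n _
  rw [hwn n i, hwn n j]
  have h := hc0 n
  field_simp
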